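/- Under the hypotheses of the previous abstract setting (continuity constant C_c, coercivity constant γ with unimodular Θ, a_ξ-projections T^ℓ onto subspaces V^ℓ), assume additionally the stable splitting property: every v ∈ V admits a decomposition v = ∑_{ℓ=0}^N v^ℓ with v^ℓ ∈ V^ℓ and ∑_ℓ ‖v^ℓ‖² ≤ K₀‖v‖². Then ∑_{ℓ=0}^N ‖T^ℓ v‖² ≥ (γ²/(C_c² K₀)) ‖v‖² for all v ∈ V. -/

import Mathlib

/-- Abstract lower bound (Lemma 4.5): under continuity (`C_c`), coercivity
(`Im(Θ a(v,v)) ≥ γ‖v‖²`, `|Θ| = 1`), the `a`-projection property, and the stable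
splitting property with constant `K₀`, one has `∑ ‖T ℓ v‖² ≥ (γ²/(C_c² K₀)) ‖v‖²`. -/
theorem stmt7 {V : Type*} [NormedAddCommGroup V] [InnerProductSpace ℂ V] [CompleteSpace V]
    (N : ℕ) (a : V → V → ℂ) (Cc γ K₀ : ℝ) (Θ : ℂ)
    (hCc : 0 < Cc) (hγ : 0 < γ) (hK₀ : 0 < K₀) (hΘ : ‖Θ‖ = 1)
    (hadd : ∀ u v w : V, a u (v + w) = a u v + a u w)
    (hcont : ∀ u v : V, ‖a u v‖ ≤ Cc * ‖u‖ * ‖v‖)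
    (hcoer : ∀ v : V, γ * ‖v‖ ^ 2 ≤ (Θ * a v v).im)
    (Vsub : Fin (N + 1) → Submodule ℂ V) (T : Fin (N + 1) → V → V)
    (hrange : ∀ ℓ v, T ℓ v ∈ Vsub ℓ)
    (hproj : ∀ ℓ (v : V), ∀ w ∈ Vsub ℓ, a (T ℓ v) w = a v w)
    (hsplit : ∀ v : V, ∃ u : Fin (N + 1) → V, (∀ ℓ, u ℓ ∈ Vsub ℓ) ∧
      (∑ ℓ, u ℓ) = v ∧ (∑ ℓ, ‖u ℓ‖ ^ 2) ≤ K₀ * ‖v‖ ^ 2) :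
    ∀ v : V, (γ ^ 2 / (Cc ^ 2 * K₀)) * ‖v‖ ^ 2 ≤ ∑ ℓ, ‖T ℓ v‖ ^ 2 := by
  intro v
  obtain ⟨u, humem, husum, hunorm⟩ := hsplit v
  by_cases hv : v = 0
  · subst hv
    simp only [norm_zero, ne_eq, OfNat.ofNat_ne_zero, not_false_eq_true, zero_pow, mul_zero]
    exact Finset.sum_nonneg fun i _ => sq_nonneg _
  have hvpos : (0:ℝ) < ‖v‖ := norm_pos_iff.mpr hv
  -- additivity over sums
  have hzero : ∀ w : V, a w 0 = 0 := by
    intro w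
    have := hadd w 0 0
    simpa using this.symm
  have hsumgen : ∀ (w : V) (s : Finset (Fin (N+1))),
      a w (∑ x ∈ s, u x) = ∑ x ∈ s, a w (u x) := by
    intro w s
    induction s using Finset.induction with
    | empty => simpa using hzero w
    | insert _ _ h ih => rw [Finset.sum_insert h, Finset.sum_insert h, hadd, ih]
  have hsum : a v v = ∑ ℓ, a v (u ℓ) := by
    calc a v v = a v (∑ ℓ, u ℓ) := by rw [husum]
      _ = ∑ ℓ, a v (u ℓ) := hsumgen v _
  -- replace by projections
  have hsum2 : a v v = ∑ ℓ, a (T ℓ v) (u ℓ) := by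
    rw [hsum]
    exact Finset.sum_congr rfl fun ℓ _ => (hproj ℓ v (u ℓ) (humem ℓ)).symm
  -- main estimate: γ‖v‖² ≤ Cc * ∑ ‖T ℓ v‖ ‖u ℓ‖
  have key : γ * ‖v‖ ^ 2 ≤ Cc * ∑ ℓ, ‖T ℓ v‖ * ‖u ℓ‖ := by
    calc γ * ‖v‖ ^ 2 ≤ (Θ * a v v).im := hcoer v
      _ ≤ ‖Θ * a v v‖ := Complex.abs_im_le_norm _ |>.trans' (le_abs_self _)
      _ = ‖a v v‖ := by rw [norm_mul, hΘ, one_mul]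
      _ = ‖∑ ℓ, a (T ℓ v) (u ℓ)‖ := by rw [hsum2]
      _ ≤ ∑ ℓ, ‖a (T ℓ v) (u ℓ)‖ :=
          norm_sum_le _ _
      _ ≤ ∑ ℓ, Cc * ‖T ℓ v‖ * ‖u ℓ‖ :=
          Finset.sum_le_sum fun ℓ _ => hcont _ _
      _ = Cc * ∑ ℓ, ‖T ℓ v‖ * ‖u ℓ‖ := by
          rw [Finset.mul_sum]; exact Finset.sum_congr rfl fun ℓ _ => by ring
  -- Cauchy–Schwarz
  have CS : (∑ ℓ, ‖T ℓ v‖ * ‖u ℓ‖) ^ 2 ≤ (∑ ℓ, ‖T ℓ v‖ ^ 2) * ∑ ℓ, ‖u ℓ‖ ^ 2 :=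
    Finset.sum_mul_sq_le_sq_mul_sq _ _ _
  set S := ∑ ℓ, ‖T ℓ v‖ ^ 2 with hS
  have hSnn : 0 ≤ S := Finset.sum_nonneg fun i _ => sq_nonneg _
  have h1 : (γ * ‖v‖ ^ 2) ^ 2 ≤ Cc ^ 2 * (S * (K₀ * ‖v‖ ^ 2)) := by
    have h2 : (γ * ‖v‖ ^ 2) ^ 2 ≤ (Cc * ∑ ℓ, ‖T ℓ v‖ * ‖u ℓ‖) ^ 2 := by
      apply pow_le_pow_left₀ (by positivity) key
    refine h2.trans ?_
    rw [mul_pow]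
    have h3 : (∑ ℓ, ‖T ℓ v‖ * ‖u ℓ‖) ^ 2 ≤ S * (K₀ * ‖v‖ ^ 2) :=
      CS.trans (mul_le_mul_of_nonneg_left hunorm hSnn)
    exact mul_le_mul_of_nonneg_left h3 (by positivity)
  -- conclude
  rw [div_mul_eq_mul_div, div_le_iff₀ (by positivity)]
  have hv2 : (0:ℝ) < ‖v‖ ^ 2 := by positivity
  nlinarith [h1, hv2, hSnn]
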